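/- Let L = C D where C ∈ ℝ^{k×n} has full row rank and D ∈ ℝ^{n×n} is invertible diagonal. For matrices A ∈ ℝ^{n×n} and O ∈ ℝ^{l×n}: L is a constrained lumping of A with respect to O (i.e., rowspan(O) ⊆ rowspan(L) and rowspan(LA) ⊆ rowspan(L)) if and only if C is a constrained lumping of D A D⁻¹ with respect to O D⁻¹. -/

import Mathlib

/-- Row space of a matrix: the span of its rows. -/
def rowspan {k n : ℕ} (M : Matrix (Fin k) (Fin n) ℝ) : Submodule ℝ (Fin n → ℝ) :=
  Submodule.span ℝ (Set.range M)

lemma rowspan_mul {k n : ℕ} (X : Matrix (Fin k) (Fin n) ℝ) (M : Matrix (Fin n) (Fin n) ℝ) :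
    rowspan (X * M) = (rowspan X).map M.vecMulLinear := by
  rw [rowspan, rowspan, Submodule.map_span]
  congr 1
  ext v
  constructor
  · rintro ⟨i, rfl⟩
    exact ⟨X i, ⟨i, rfl⟩, rfl⟩
  · rintro ⟨w, ⟨i, rfl⟩, rfl⟩
    exact ⟨i, rfl⟩

lemma rowspan_mul_le_iff {k l n : ℕ} (X : Matrix (Fin l) (Fin n) ℝ)
    (Y : Matrix (Fin k) (Fin n) ℝ) (M : Matrix (Fin n) (Fin n) ℝ) (hM : IsUnit M.det) :
    rowspan (X * M) ≤ rowspan (Y * M) ↔ rowspan X ≤ rowspan Y := by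
  rw [rowspan_mul, rowspan_mul]
  refine Submodule.map_le_map_iff_of_injective ?_ _ _
  intro x y hxy
  simp only [Matrix.vecMulLinear_apply] at hxy
  have := congrArg (fun v => Matrix.vecMul v M⁻¹) hxy
  simpa [Matrix.vecMul_vecMul, Matrix.mul_nonsing_inv M hM] using this

theorem constrained_lumping_conjugation {k n l : ℕ}
    (C : Matrix (Fin k) (Fin n) ℝ) (hCrank : C.rank = k)
    (d : Fin n → ℝ) (hd : ∀ i, d i ≠ 0)
    (A : Matrix (Fin n) (Fin n) ℝ) (O : Matrix (Fin l) (Fin n) ℝ)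
    (L : Matrix (Fin k) (Fin n) ℝ) (hL : L = C * Matrix.diagonal d) :
    (rowspan O ≤ rowspan L ∧ rowspan (L * A) ≤ rowspan L) ↔
    (rowspan (O * (Matrix.diagonal d)⁻¹) ≤ rowspan C ∧
      rowspan (C * (Matrix.diagonal d * A * (Matrix.diagonal d)⁻¹)) ≤ rowspan C) := by
  set D := Matrix.diagonal d with hD
  have hdet : IsUnit D.det := by
    rw [hD, Matrix.det_diagonal]
    exact (Finset.prod_ne_zero_iff.mpr fun i _ => hd i).isUnit
  have hID : D⁻¹ * D = 1 := Matrix.nonsing_inv_mul D hdet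
  have hO : O = (O * D⁻¹) * D := by rw [Matrix.mul_assoc, hID, Matrix.mul_one]
  have hLA : L * A = (C * (D * A * D⁻¹)) * D := by
    rw [hL]
    simp only [Matrix.mul_assoc, hID, Matrix.mul_one]
  constructor
  · rintro ⟨h1, h2⟩
    constructor
    · rw [← rowspan_mul_le_iff _ _ D hdet, ← hO, ← hL]; exact h1
    · rw [← rowspan_mul_le_iff _ _ D hdet, ← hLA, ← hL]; exact h2
  · rintro ⟨h1, h2⟩
    constructor
    · rw [hO, hL, rowspan_mul_le_iff _ _ D hdet]; exact h1
    · rw [hLA, hL, rowspan_mul_le_iff _ _ D hdet]; exact h2
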